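/- For each integer n ≥ 1 let t₀ = t₀(n) be the unique complex solution of t e^t = n i/(2π) with 0 < Im t₀ < π, and set A(n) = Re(log t₀ − 1/t₀) and B(n) = 2√(2π)·|t₀|/|1 + t₀|^{1/2}. Then A(n)/log log n → 1 and B(n)/√(8π log n) → 1 as n → ∞. -/

import Mathlib

open Complex Real Filter Topology

private lemma aux_div_tendsto_one {f g : ℕ → ℝ}
    (h : Tendsto (fun n => f n - g n) atTop (nhds 0))
    (hg : Tendsto g atTop atTop) :
    Tendsto (fun n => f n / g n) atTop (nhds 1) := by
  have hg0 : ∀ᶠ n in atTop, 0 < g n := hg.eventually_gt_atTop 0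
  have h2 : Tendsto (fun n => (f n - g n) / g n + 1) atTop (nhds 1) := by
    simpa using (h.div_atTop hg).add tendsto_const_nhds
  refine h2.congr' ?_
  filter_upwards [hg0] with n hn
  field_simp
  ring

theorem A_B_leading_asymptotics (t₀ : ℕ → ℂ)
    (ht₀ : ∀ n : ℕ, 1 ≤ n → (0 < (t₀ n).im ∧ (t₀ n).im < π ∧
      t₀ n * Complex.exp (t₀ n) = n * Complex.I / (2 * π))) :
    Tendsto (fun n : ℕ =>
        (Complex.log (t₀ n) - 1 / t₀ n).re / Real.log (Real.log n)) atTop (nhds 1) ∧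
    Tendsto (fun n : ℕ =>
        (2 * Real.sqrt (2 * π) * ‖t₀ n‖ / Real.sqrt (‖1 + t₀ n‖)) /
          Real.sqrt (8 * π * Real.log n)) atTop (nhds 1) := by
  set x : ℕ → ℝ := fun n => (t₀ n).re with hxdef
  set r : ℕ → ℝ := fun n => ‖t₀ n‖ with hrdef
  -- modulus of the defining equation
  have heq : ∀ n : ℕ, 1 ≤ n → r n * Real.exp (x n) = n / (2 * π) := by
    intro n hn
    have h := congrArg norm (ht₀ n hn).2.2
    rwa [norm_mul, Complex.norm_exp, norm_div, norm_mul, Complex.norm_natCast, Complex.norm_I,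
      mul_one, norm_mul, Complex.norm_two, Complex.norm_real, Real.norm_eq_abs, _root_.abs_of_pos Real.pi_pos] at h
  have hrpos : ∀ n : ℕ, 1 ≤ n → 0 < r n := by
    intro n hn
    have h := heq n hn
    have hn' : (0:ℝ) < (n:ℝ) / (2 * π) := by
      have : (0:ℝ) < (n:ℝ) := by exact_mod_cast hn
      positivity
    nlinarith [Real.exp_pos (x n), norm_nonneg (t₀ n)]
  have hr_ge : ∀ n : ℕ, x n ≤ r n := fun n =>
    le_trans (le_abs_self _) (Complex.abs_re_le_norm _)
  have hr_le : ∀ n : ℕ, 1 ≤ n → r n ≤ |x n| + π := by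
    intro n hn
    have h1 := Complex.norm_le_abs_re_add_abs_im (t₀ n)
    have h2 := (ht₀ n hn).1
    have h3 := (ht₀ n hn).2.1
    have : |(t₀ n).im| ≤ π := by rw [_root_.abs_of_pos h2]; exact h3.le
    calc r n ≤ |x n| + |(t₀ n).im| := h1
      _ ≤ |x n| + π := by linarith
  -- x → ∞
  have hx_top : Tendsto x atTop atTop := by
    rw [tendsto_atTop]
    intro M
    set M' := max M 0 with hM'
    have hM0 : (0:ℝ) ≤ M' := le_max_right _ _
    have hbig : Tendsto (fun n : ℕ => (n:ℝ) / (2 * π)) atTop atTop :=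
      tendsto_natCast_atTop_atTop.atTop_div_const (by positivity)
    filter_upwards [hbig.eventually_gt_atTop ((M' + π) * Real.exp M' + π + 1),
      eventually_ge_atTop 1] with n hn hn1
    by_contra hlt
    push_neg at hlt
    have hxM : x n < M' := lt_of_lt_of_le hlt (le_max_left _ _)
    have hkey : (n:ℝ) / (2 * π) ≤ (M' + π) * Real.exp M' + π + 1 := by
      rw [← heq n hn1]
      have hrle := hr_le n hn1
      rcases le_or_gt 0 (x n) with hx0 | hx0
      · rw [_root_.abs_of_nonneg hx0] at hrle
        have h1 : r n * Real.exp (x n) ≤ (x n + π) * Real.exp (x n) :=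
          mul_le_mul_of_nonneg_right hrle (Real.exp_pos _).le
        have h2 : (x n + π) * Real.exp (x n) ≤ (M' + π) * Real.exp M' :=
          mul_le_mul (by linarith) (Real.exp_le_exp.2 hxM.le) (Real.exp_pos _).le
            (by linarith [Real.pi_pos])
        linarith [Real.pi_pos]
      · rw [_root_.abs_of_neg hx0] at hrle
        have hAB : Real.exp (x n) * Real.exp (-(x n)) = 1 := by
          rw [← Real.exp_add]; simp
        have hb : (-(x n)) * Real.exp (x n) ≤ 1 := by
          nlinarith [Real.add_one_le_exp (-(x n)), Real.exp_pos (x n)]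
        have he1 : Real.exp (x n) ≤ 1 := Real.exp_le_one_iff.2 hx0.le
        have h1 : r n * Real.exp (x n) ≤ (-(x n) + π) * Real.exp (x n) :=
          mul_le_mul_of_nonneg_right hrle (Real.exp_pos _).le
        have h2 : (-(x n) + π) * Real.exp (x n) ≤ 1 + π := by
          have : π * Real.exp (x n) ≤ π := by nlinarith [Real.pi_pos]
          nlinarith
        nlinarith [mul_nonneg (by linarith [Real.pi_pos] : (0:ℝ) ≤ M' + π) (Real.exp_pos M').le]
    linarith
  -- eventual basics
  have hxe1 : ∀ᶠ n : ℕ in atTop, 1 ≤ x n := hx_top.eventually_ge_atTop 1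
  have hNn : ∀ᶠ n : ℕ in atTop, 1 ≤ n := eventually_ge_atTop 1
  set L : ℕ → ℝ := fun n => Real.log ((n:ℝ) / (2 * π)) with hLdef
  have hlog_eq : ∀ᶠ n : ℕ in atTop, Real.log (r n) + x n = L n := by
    filter_upwards [hNn] with n hn
    show Real.log (r n) + x n = Real.log ((n:ℝ) / (2 * π))
    rw [← heq n hn, Real.log_mul (hrpos n hn).ne' (Real.exp_pos _).ne', Real.log_exp]
  have hx_le_L : ∀ᶠ n : ℕ in atTop, x n ≤ L n := by
    filter_upwards [hlog_eq, hxe1] with n h1 h2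
    have : 0 ≤ Real.log (r n) := Real.log_nonneg (le_trans h2 (hr_ge n))
    linarith
  have hx_ge : ∀ᶠ n : ℕ in atTop, L n - Real.log (L n + π) ≤ x n := by
    filter_upwards [hlog_eq, hxe1, hNn, hx_le_L] with n h1 h2 hn h3
    have hrle : r n ≤ x n + π := by
      have := hr_le n hn; rwa [_root_.abs_of_nonneg (by linarith)] at this
    have : Real.log (r n) ≤ Real.log (L n + π) :=
      Real.log_le_log (hrpos n hn) (by linarith)
    linarith
  have hL_top : Tendsto L atTop atTop :=
    Real.tendsto_log_atTop.comp (tendsto_natCast_atTop_atTop.atTop_div_const (by positivity))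
  have hlogn_top : Tendsto (fun n : ℕ => Real.log n) atTop atTop :=
    Real.tendsto_log_atTop.comp tendsto_natCast_atTop_atTop
  have hlogn_pos : ∀ᶠ n : ℕ in atTop, 0 < Real.log n := hlogn_top.eventually_gt_atTop 0
  have hL_eq : ∀ᶠ n : ℕ in atTop, L n = Real.log n - Real.log (2 * π) := by
    filter_upwards [hNn] with n hn
    exact Real.log_div (Nat.cast_ne_zero.2 (by omega)) (by positivity)
  have hLdiv : Tendsto (fun n => L n / Real.log n) atTop (nhds 1) := by
    have h0 : Tendsto (fun n : ℕ => Real.log (2 * π) / Real.log n) atTop (nhds 0) :=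
      tendsto_const_nhds.div_atTop hlogn_top
    have h1 : Tendsto (fun n : ℕ => 1 - Real.log (2 * π) / Real.log n) atTop (nhds 1) := by
      simpa using tendsto_const_nhds.sub h0
    refine h1.congr' ?_
    filter_upwards [hL_eq, hlogn_pos] with n h1 h2
    rw [h1, sub_div, div_self h2.ne']
  have hLpi_top : Tendsto (fun n => L n + π) atTop atTop :=
    tendsto_atTop_add_const_right _ _ hL_top
  have hlogL_div : Tendsto (fun n => Real.log (L n + π) / Real.log n) atTop (nhds 0) := by
    have h1 : Tendsto (fun n : ℕ => Real.log (L n + π) / (L n + π)) atTop (nhds 0) :=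
      (Real.isLittleO_log_id_atTop.tendsto_div_nhds_zero).comp hLpi_top
    have h2 : Tendsto (fun n : ℕ => (L n + π) / Real.log n) atTop (nhds 1) := by
      have h3 : Tendsto (fun n : ℕ => L n / Real.log n + π / Real.log n) atTop (nhds 1) := by
        simpa using hLdiv.add (tendsto_const_nhds.div_atTop hlogn_top (f := fun _ => π))
      refine h3.congr' ?_
      filter_upwards with n
      rw [add_div]
    have h4 := h1.mul h2
    rw [zero_mul] at h4
    refine h4.congr' ?_
    filter_upwards [hLpi_top.eventually_gt_atTop 0] with n hn
    rw [div_mul_div_comm, mul_comm (L n + π) (Real.log n), mul_div_mul_right _ _ hn.ne']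
  have hxdivlog : Tendsto (fun n => x n / Real.log n) atTop (nhds 1) := by
    have hlow : Tendsto (fun n => L n / Real.log n - Real.log (L n + π) / Real.log n)
        atTop (nhds 1) := by simpa using hLdiv.sub hlogL_div
    refine tendsto_of_tendsto_of_tendsto_of_le_of_le' hlow hLdiv ?_ ?_
    · filter_upwards [hx_ge, hlogn_pos] with n h1 h2
      rw [← sub_div]
      exact (div_le_div_iff_of_pos_right h2).2 h1
    · filter_upwards [hx_le_L, hlogn_pos] with n h1 h2
      exact (div_le_div_iff_of_pos_right h2).2 h1
  have hr_top : Tendsto r atTop atTop := tendsto_atTop_mono hr_ge hx_top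
  have hrdivlog : Tendsto (fun n => r n / Real.log n) atTop (nhds 1) := by
    have hup : Tendsto (fun n => x n / Real.log n + π / Real.log n) atTop (nhds 1) := by
      simpa using hxdivlog.add (tendsto_const_nhds.div_atTop hlogn_top (f := fun _ => π))
    refine tendsto_of_tendsto_of_tendsto_of_le_of_le' hxdivlog hup ?_ ?_
    · filter_upwards [hlogn_pos] with n h2
      exact (div_le_div_iff_of_pos_right h2).2 (hr_ge n)
    · filter_upwards [hlogn_pos, hxe1, hNn] with n h2 h3 hn
      have hrle : r n ≤ x n + π := by
        have := hr_le n hn; rwa [_root_.abs_of_nonneg (by linarith)] at this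
      rw [← add_div]
      exact (div_le_div_iff_of_pos_right h2).2 hrle
  have hloglog_top : Tendsto (fun n : ℕ => Real.log (Real.log n)) atTop atTop :=
    Real.tendsto_log_atTop.comp hlogn_top
  have hlogr_sub : Tendsto (fun n => Real.log (r n) - Real.log (Real.log n)) atTop (nhds 0) := by
    have hcont : Tendsto (fun n : ℕ => Real.log (r n / Real.log n)) atTop (nhds 0) := by
      have := (Real.continuousAt_log one_ne_zero).tendsto.comp hrdivlog
      simpa [Function.comp_def] using this
    refine hcont.congr' ?_
    filter_upwards [hNn, hlogn_pos] with n h1 h2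
    rw [Real.log_div (hrpos n h1).ne' h2.ne']
  have hxr2 : Tendsto (fun n => x n / (r n) ^ 2) atTop (nhds 0) := by
    have hinv : Tendsto (fun n => 1 / x n) atTop (nhds 0) := by
      simpa [one_div, Function.comp_def] using tendsto_inv_atTop_zero.comp hx_top
    refine tendsto_of_tendsto_of_tendsto_of_le_of_le' tendsto_const_nhds hinv ?_ ?_
    · filter_upwards [hxe1] with n h1
      positivity
    · filter_upwards [hxe1] with n h1
      have hx0 : 0 < x n := by linarith
      rw [div_le_div_iff₀ (by nlinarith [hr_ge n] : (0:ℝ) < r n ^ 2) hx0]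
      nlinarith [hr_ge n]
  have hAsub : Tendsto
      (fun n => (Real.log (r n) - x n / (r n) ^ 2) - Real.log (Real.log n)) atTop (nhds 0) := by
    have := hlogr_sub.sub hxr2
    rw [sub_zero] at this
    refine this.congr' ?_
    filter_upwards with n
    ring
  constructor
  · have hAeq : ∀ᶠ n : ℕ in atTop,
        (Real.log (r n) - x n / (r n) ^ 2) = (Complex.log (t₀ n) - 1 / t₀ n).re := by
      filter_upwards [hNn] with n hn
      rw [Complex.sub_re, Complex.log_re, one_div, Complex.inv_re, ← Complex.sq_norm]
    have h1 : Tendsto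
        (fun n => (Complex.log (t₀ n) - 1 / t₀ n).re - Real.log (Real.log n)) atTop (nhds 0) := by
      refine hAsub.congr' ?_
      filter_upwards [hAeq] with n h
      rw [h]
    exact aux_div_tendsto_one h1 hloglog_top
  · -- B part
    have habs1t : Tendsto (fun n => ‖1 + t₀ n‖ / r n) atTop (nhds 1) := by
      have hub : ∀ n : ℕ, ‖1 + t₀ n‖ ≤ 1 + r n := by
        intro n
        simpa using norm_add_le 1 (t₀ n)
      have hlb : ∀ n : ℕ, r n - 1 ≤ ‖1 + t₀ n‖ := by
        intro n
        have : r n ≤ ‖1 + t₀ n‖ + 1 := by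
          have h := norm_add_le (1 + t₀ n) (-1)
          simpa [add_assoc] using h
        linarith
      have hrpos' : ∀ᶠ n : ℕ in atTop, 0 < r n := hr_top.eventually_gt_atTop 0
      have hlo : Tendsto (fun n => 1 - 1 / r n) atTop (nhds 1) := by
        have : Tendsto (fun n => 1 / r n) atTop (nhds 0) :=
          tendsto_const_nhds.div_atTop hr_top
        simpa using tendsto_const_nhds.sub this
      have hhi : Tendsto (fun n => 1 + 1 / r n) atTop (nhds 1) := by
        have : Tendsto (fun n => 1 / r n) atTop (nhds 0) :=
          tendsto_const_nhds.div_atTop hr_top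
        simpa using tendsto_const_nhds.add this
      refine tendsto_of_tendsto_of_tendsto_of_le_of_le' hlo hhi ?_ ?_
      · filter_upwards [hrpos'] with n hn
        have h1 : (1:ℝ) - 1 / r n = (r n - 1) / r n := by
          rw [sub_div, div_self hn.ne']
        rw [h1]
        exact (div_le_div_iff_of_pos_right hn).2 (hlb n)
      · filter_upwards [hrpos'] with n hn
        have h1 : (1:ℝ) + 1 / r n = (1 + r n) / r n := by
          rw [add_div, div_self hn.ne', add_comm]
        rw [h1]
        exact (div_le_div_iff_of_pos_right hn).2 (hub n)
    have hr1t : Tendsto (fun n => r n / ‖1 + t₀ n‖) atTop (nhds 1) := by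
      have := habs1t.inv₀ one_ne_zero
      rw [inv_one] at this
      refine this.congr' ?_
      filter_upwards with n
      rw [inv_div]
    have hinner : Tendsto
        (fun n => (r n) ^ 2 / (‖1 + t₀ n‖ * Real.log n)) atTop (nhds 1) := by
      have h := hr1t.mul hrdivlog
      rw [mul_one] at h
      refine h.congr' ?_
      filter_upwards with n
      rw [div_mul_div_comm, ← sq]
    have hsq : Tendsto
        (fun n => Real.sqrt ((r n) ^ 2 / (‖1 + t₀ n‖ * Real.log n)))
        atTop (nhds 1) := by
      have := (Real.continuous_sqrt.tendsto 1).comp hinner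
      simpa [Function.comp_def] using this
    refine hsq.congr' ?_
    have h1tpos : ∀ᶠ n : ℕ in atTop, 0 < ‖1 + t₀ n‖ := by
      filter_upwards [hr_top.eventually_gt_atTop 2] with n hn
      have : r n ≤ ‖1 + t₀ n‖ + 1 := by
        have h := norm_add_le (1 + t₀ n) (-1)
        simpa [add_assoc] using h
      linarith
    filter_upwards [hlogn_pos, hr_top.eventually_gt_atTop 2, h1tpos] with n hlog hr2 h1t
    have h2s : 2 * Real.sqrt (2 * π) = Real.sqrt (8 * π) := by
      have hsq : ((2:ℝ) * Real.sqrt (2 * π)) ^ 2 = 8 * π := by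
        rw [mul_pow, Real.sq_sqrt (by positivity)]; ring
      rw [← hsq, Real.sqrt_sq (by positivity)]
    have h8 : Real.sqrt (8 * π * Real.log n) = Real.sqrt (8 * π) * Real.sqrt (Real.log n) :=
      Real.sqrt_mul (by positivity) _
    rw [Real.sqrt_div (by positivity) _, Real.sqrt_sq (show (0:ℝ) ≤ r n from norm_nonneg _),
      Real.sqrt_mul h1t.le, h2s, h8]
    have hs8 : (0:ℝ) < Real.sqrt (8 * π) := Real.sqrt_pos.2 (by positivity)
    have hs1t : (0:ℝ) < Real.sqrt (‖1 + t₀ n‖) := Real.sqrt_pos.2 h1t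
    have hslog : (0:ℝ) < Real.sqrt (Real.log n) := Real.sqrt_pos.2 hlog
    field_simp
    ring
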